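/- arXiv:2602.14692 — 2 statements merged into one kernel-verified Lean document; each statement's English description precedes it below -/
import Mathlib

section
/- If P*P satisfies a WPI with β, i.e. ‖f‖²_Π ≤ s·ℰ_Π(P*P, f) + β(s)·‖f‖²_osc for all s > 0 and f ∈ L²₀(Π), then P_X*P_X satisfies a WPI with the same β: ‖g‖²_{Π_X} ≤ s·ℰ_{Π_X}(P_X*P_X, g) + β(s)·‖g‖²_osc for all s > 0 and g ∈ L²₀(Π_X). -/
open MeasureTheory ENNReal

noncomputable section

/-- Oscillation seminorm, valued in `[0,∞]`. -/
def oscNorm {α : Type*} [MeasurableSpace α] (μ : Measure α) (f : α → ℝ) : ℝ≥0∞ :=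
  essSup (fun p : α × α => ENNReal.ofReal |f p.1 - f p.2|) (μ.prod μ)

/-- The Dirichlet form `ℰ_μ(T, f) = ⟨(I − T)f, f⟩_μ`. -/
def dirichletForm {α : Type*} [MeasurableSpace α]
    (μ : Measure α) (T : Lp ℝ 2 μ →L[ℝ] Lp ℝ 2 μ) (f : Lp ℝ 2 μ) : ℝ :=
  @inner ℝ _ _ (f - T f) f

lemma dirichletForm_adjoint_comp {α : Type*} [MeasurableSpace α] (μ : Measure α)
    (P : Lp ℝ 2 μ →L[ℝ] Lp ℝ 2 μ) (f : Lp ℝ 2 μ) :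
    dirichletForm μ ((ContinuousLinearMap.adjoint P) ∘L P) f = ‖f‖ ^ 2 - ‖P f‖ ^ 2 := by
  simp only [dirichletForm, inner_sub_left, ContinuousLinearMap.comp_apply,
    ContinuousLinearMap.adjoint_inner_left, real_inner_self_eq_norm_sq]
lemma meas_fam_left {X Y : Type*} [MeasurableSpace X] [MeasurableSpace Y]
    (κ : X → Measure Y) (hκ : Measurable κ) (hp : ∀ x, IsProbabilityMeasure (κ x)) :
    Measurable fun x => (κ x).map (fun y => (x, y)) := by
  let κK : ProbabilityTheory.Kernel X Y := ⟨κ, hκ⟩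
  haveI : ProbabilityTheory.IsMarkovKernel κK := ⟨hp⟩
  apply Measure.measurable_of_measurable_coe
  intro s hs
  have h : (fun x => (κ x).map (fun y => (x, y)) s) = fun x => κK x (Prod.mk x ⁻¹' s) := by
    funext x; rw [Measure.map_apply measurable_prodMk_left hs]; rfl
  rw [h]
  exact ProbabilityTheory.Kernel.measurable_kernel_prodMk_left hs
lemma meas_fam_right {X Y : Type*} [MeasurableSpace X] [MeasurableSpace Y]
    (η : Y → Measure X) (hη : Measurable η) (hp : ∀ y, IsProbabilityMeasure (η y)) :
    Measurable fun y => (η y).map (fun x => (x, y)) := by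
  let ηK : ProbabilityTheory.Kernel Y X := ⟨η, hη⟩
  haveI : ProbabilityTheory.IsMarkovKernel ηK := ⟨hp⟩
  apply Measure.measurable_of_measurable_coe
  intro s hs
  have h : (fun y => (η y).map (fun x => (x, y)) s)
      = fun y => ηK y (Prod.mk y ⁻¹' (Prod.swap ⁻¹' s)) := by
    funext y; rw [Measure.map_apply measurable_prodMk_right hs]; rfl
  rw [h]
  exact ProbabilityTheory.Kernel.measurable_kernel_prodMk_left (hs.preimage measurable_swap)

variable {X Y : Type*} [MeasurableSpace X] [MeasurableSpace Y]

/-- if `P*P` satisfies a WPI with `β`, then the `X`-marginal kernel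
`P_X` satisfies a WPI for `P_X*P_X` with the same `β`. -/
theorem stmt12
    (π : Measure (X × Y)) [IsProbabilityMeasure π]
    (κ : X → Measure Y) (hκmeas : Measurable κ) (hκprob : ∀ x, IsProbabilityMeasure (κ x))
    (η : Y → Measure X) (hηmeas : Measurable η) (hηprob : ∀ y, IsProbabilityMeasure (η y))
    (hκdis : π = (π.fst).bind (fun x => (κ x).map (fun y => (x, y))))
    (hηdis : π = (π.snd).bind (fun y => (η y).map (fun x => (x, y))))
    -- the deterministic-scan Gibbs operator P on L²(π)
    (P : Lp ℝ 2 π →L[ℝ] Lp ℝ 2 π)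
    (hP : ∀ f : Lp ℝ 2 π, ∀ᵐ p ∂π,
      P f p = ∫ y', (∫ x', f (x', y') ∂(η y')) ∂(κ p.1))
    -- the X-marginal operator P_X on L²(π_X)
    (PX : Lp ℝ 2 π.fst →L[ℝ] Lp ℝ 2 π.fst)
    (hPX : ∀ g : Lp ℝ 2 π.fst, ∀ᵐ x ∂π.fst,
      PX g x = ∫ y, (∫ x', g x' ∂(η y)) ∂(κ x))
    -- β and the WPI for P*P
    (β : ℝ → ℝ) (hβnonneg : ∀ s : ℝ, 0 < s → 0 ≤ β s)
    (hβanti : AntitoneOn β (Set.Ioi (0 : ℝ)))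
    (hβlim : Filter.Tendsto β Filter.atTop (nhds 0))
    (hwpi : ∀ s : ℝ, 0 < s → ∀ f : Lp ℝ 2 π, (∫ p, f p ∂π) = 0 →
      ENNReal.ofReal (‖f‖ ^ 2) ≤
        ENNReal.ofReal (s * dirichletForm π ((ContinuousLinearMap.adjoint P) ∘L P) f) +
          ENNReal.ofReal (β s) * (oscNorm π f) ^ 2) :
    ∀ s : ℝ, 0 < s → ∀ g : Lp ℝ 2 π.fst, (∫ x, g x ∂π.fst) = 0 →
      ENNReal.ofReal (‖g‖ ^ 2) ≤
        ENNReal.ofReal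
            (s * dirichletForm π.fst ((ContinuousLinearMap.adjoint PX) ∘L PX) g) +
          ENNReal.ofReal (β s) * (oscNorm π.fst g) ^ 2 := by
  intro s hs g hg0
  -- kernels
  let ηK : ProbabilityTheory.Kernel Y X := ⟨η, hηmeas⟩
  haveI : ProbabilityTheory.IsMarkovKernel ηK := ⟨hηprob⟩
  let κK : ProbabilityTheory.Kernel X Y := ⟨κ, hκmeas⟩
  haveI : ProbabilityTheory.IsMarkovKernel κK := ⟨hκprob⟩
  -- lift g to f on the product space
  have hmp : MeasurePreserving (Prod.fst : X × Y → X) π π.fst := ⟨measurable_fst, rfl⟩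
  set f : Lp ℝ 2 π := Lp.compMeasurePreserving Prod.fst hmp g with hfdef
  have hfg : ⇑f =ᵐ[π] (⇑g) ∘ Prod.fst := Lp.coeFn_compMeasurePreserving g hmp
  have hnf : ‖f‖ = ‖g‖ := Lp.norm_compMeasurePreserving g hmp
  have hfsm : StronglyMeasurable (⇑f) := Lp.stronglyMeasurable f
  have hgsm : StronglyMeasurable (⇑g) := Lp.stronglyMeasurable g
  -- zero mean
  have hint : (∫ p, f p ∂π) = 0 := by
    rw [integral_congr_ae hfg]
    have h1 : ∫ p, ((⇑g) ∘ Prod.fst) p ∂π = ∫ x, g x ∂(π.map Prod.fst) :=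
      (integral_map measurable_fst.aemeasurable
        (show AEStronglyMeasurable (⇑g) (π.map Prod.fst) from Lp.aestronglyMeasurable g)).symm
    rw [h1]
    exact hg0
  -- oscillation norms agree
  have hosc : oscNorm π f = oscNorm π.fst g := by
    unfold oscNorm
    have hmap1 : (π.prod π).map (Prod.fst : (X × Y) × (X × Y) → X × Y) = π := by
      rw [Measure.map_fst_prod, measure_univ, one_smul]
    have hmap2 : (π.prod π).map (Prod.snd : (X × Y) × (X × Y) → X × Y) = π := by
      rw [Measure.map_snd_prod, measure_univ, one_smul]
    have hfg1 : ⇑f =ᵐ[(π.prod π).map (Prod.fst : (X × Y) × (X × Y) → X × Y)]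
        (⇑g) ∘ Prod.fst := by rw [hmap1]; exact hfg
    have hfg2 : ⇑f =ᵐ[(π.prod π).map (Prod.snd : (X × Y) × (X × Y) → X × Y)]
        (⇑g) ∘ Prod.fst := by rw [hmap2]; exact hfg
    have hm1 := ae_eq_comp (f := (Prod.fst : (X × Y) × (X × Y) → X × Y))
        measurable_fst.aemeasurable hfg1
    have hm2 := ae_eq_comp (f := (Prod.snd : (X × Y) × (X × Y) → X × Y))
        measurable_snd.aemeasurable hfg2
    have e1 : (fun p : (X × Y) × (X × Y) => ENNReal.ofReal |f p.1 - f p.2|)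
        =ᵐ[π.prod π] fun p => ENNReal.ofReal |g p.1.1 - g p.2.1| := by
      filter_upwards [hm1, hm2] with p h1 h2
      simp only [Function.comp_apply] at h1 h2
      rw [h1, h2]
    have hmp2 : MeasurePreserving (Prod.map (Prod.fst : X × Y → X) (Prod.fst : X × Y → X))
        (π.prod π) (π.fst.prod π.fst) := hmp.prod hmp
    have hgm : Measurable fun q : X × X => ENNReal.ofReal |g q.1 - g q.2| :=
      (((hgsm.measurable.comp measurable_fst).sub
        (hgsm.measurable.comp measurable_snd)).abs).ennreal_ofReal
    rw [essSup_congr_ae e1, ← hmp2.map_eq,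
      essSup_map_measure hgm.aemeasurable hmp2.measurable.aemeasurable]
    rfl
  -- sectionwise a.e. equality of f with g
  set Sc : Set (X × Y) := {p : X × Y | ¬ (f p = g p.1)} with hScdef
  have hScMeas : MeasurableSet Sc := by
    rw [hScdef, ← Set.compl_setOf]
    exact (_root_.measurableSet_eq_fun hfsm.measurable (hgsm.comp_measurable measurable_fst).measurable).compl
  have hSnull : π Sc = 0 := ae_iff.mp hfg
  have hbindη : π Sc = ∫⁻ y, ηK y (Prod.mk y ⁻¹' (Prod.swap ⁻¹' Sc)) ∂π.snd := by
    conv_lhs => rw [hηdis]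
    rw [Measure.bind_apply hScMeas (meas_fam_right η hηmeas hηprob).aemeasurable]
    congr 1
    funext y
    rw [Measure.map_apply measurable_prodMk_right hScMeas]
    rfl
  have h1 : ∀ᵐ y ∂π.snd, ηK y (Prod.mk y ⁻¹' (Prod.swap ⁻¹' Sc)) = 0 := by
    have hz : ∫⁻ y, ηK y (Prod.mk y ⁻¹' (Prod.swap ⁻¹' Sc)) ∂π.snd = 0 := by
      rw [← hbindη]; exact hSnull
    have hmeas : Measurable fun y => ηK y (Prod.mk y ⁻¹' (Prod.swap ⁻¹' Sc)) :=
      ProbabilityTheory.Kernel.measurable_kernel_prodMk_left (hScMeas.preimage measurable_swap)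
    have := (lintegral_eq_zero_iff hmeas).mp hz
    filter_upwards [this] with y hy using hy
  have h2 : ∀ᵐ y ∂π.snd, (∫ x', f (x', y) ∂η y) = ∫ x', g x' ∂η y := by
    filter_upwards [h1] with y hy
    refine integral_congr_ae (ae_iff.mpr ?_)
    exact hy
  -- the set where the section integrals agree
  have hu : StronglyMeasurable fun y => ∫ x', f (x', y) ∂η y := by
    have := (StronglyMeasurable.integral_kernel_prod_right' (κ := ηK)
      (hfsm.comp_measurable measurable_swap))
    exact this
  have hv : StronglyMeasurable fun y => ∫ x', g x' ∂η y := by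
    have := (StronglyMeasurable.integral_kernel_prod_right' (κ := ηK)
      (hgsm.comp_measurable measurable_snd))
    exact this
  set Qc : Set Y := {y | ¬ ((∫ x', f (x', y) ∂η y) = ∫ x', g x' ∂η y)} with hQcdef
  have hQcMeas : MeasurableSet Qc := by
    rw [hQcdef, ← Set.compl_setOf]
    exact (_root_.measurableSet_eq_fun hu.measurable hv.measurable).compl
  have hQnull : π.snd Qc = 0 := ae_iff.mp h2
  -- transfer nullity through κ
  have hbindκ : π.snd Qc = ∫⁻ x, κK x Qc ∂π.fst := by
    rw [Measure.snd_apply hQcMeas]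
    conv_lhs => rw [hκdis]
    rw [Measure.bind_apply (hQcMeas.preimage measurable_snd)
      (meas_fam_left κ hκmeas hκprob).aemeasurable]
    congr 1
    funext x
    rw [Measure.map_apply measurable_prodMk_left (hQcMeas.preimage measurable_snd)]
    rfl
  have h3 : ∀ᵐ x ∂π.fst, κK x Qc = 0 := by
    have hz : ∫⁻ x, κK x Qc ∂π.fst = 0 := by rw [← hbindκ]; exact hQnull
    have := (lintegral_eq_zero_iff (ProbabilityTheory.Kernel.measurable_coe κK hQcMeas)).mp hz
    filter_upwards [this] with x hx using hx
  have h4 : ∀ᵐ x ∂π.fst,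
      (∫ y, (∫ x', f (x', y) ∂η y) ∂κ x) = ∫ y, (∫ x', g x' ∂η y) ∂κ x := by
    filter_upwards [h3] with x hx
    refine integral_congr_ae (ae_iff.mpr ?_)
    exact hx
  -- P f = (PX g) ∘ fst in L²
  have hPXg : ⇑(PX g) =ᵐ[π.fst] fun x => ∫ y, (∫ x', g x' ∂η y) ∂κ x := hPX g
  have h4' : (fun x => ∫ y, (∫ x', f (x', y) ∂η y) ∂κ x)
      =ᵐ[π.fst] fun x => ∫ y, (∫ x', g x' ∂η y) ∂κ x := h4
  have h5 : ⇑(PX g) =ᵐ[π.fst] fun x => ∫ y, (∫ x', f (x', y) ∂η y) ∂κ x :=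
    hPXg.trans h4'.symm
  have h5' : ⇑(PX g) =ᵐ[π.map (Prod.fst : X × Y → X)]
      fun x => ∫ y, (∫ x', f (x', y) ∂η y) ∂κ x := h5
  have h6 := ae_eq_comp (f := (Prod.fst : X × Y → X)) measurable_fst.aemeasurable h5'
  have h7 : ⇑(P f) =ᵐ[π] (⇑(PX g)) ∘ (Prod.fst : X × Y → X) := by
    have hPf : ⇑(P f) =ᵐ[π] fun p : X × Y => ∫ y', (∫ x', f (x', y') ∂η y') ∂κ p.1 := hP f
    refine hPf.trans ?_
    filter_upwards [h6] with p hp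
    simpa [Function.comp] using hp.symm
  have hPfT : P f = Lp.compMeasurePreserving Prod.fst hmp (PX g) :=
    Lp.ext (h7.trans (Lp.coeFn_compMeasurePreserving (PX g) hmp).symm)
  have hnPf : ‖P f‖ = ‖PX g‖ := by
    rw [hPfT, Lp.norm_compMeasurePreserving]
  -- Dirichlet forms agree
  have hdf : dirichletForm π ((ContinuousLinearMap.adjoint P) ∘L P) f
      = dirichletForm π.fst ((ContinuousLinearMap.adjoint PX) ∘L PX) g := by
    rw [dirichletForm_adjoint_comp, dirichletForm_adjoint_comp, hnf, hnPf]
  -- conclude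
  have := hwpi s hs f hint
  rwa [hnf, hdf, hosc] at this

end
end

section
/- If P₂*P₂ satisfies a WPI with β, i.e. ‖f‖²_Π ≤ s·ℰ_Π(P₂*P₂, f) + β(s)·‖f‖²_osc for all s > 0 and f ∈ L²₀(Π), then P̄_X*P̄_X satisfies a WPI with the same β: ‖g‖²_{Π_X} ≤ s·ℰ_{Π_X}(P̄_X*P̄_X, g) + β(s)·‖g‖²_osc for all s > 0 and g ∈ L²₀(Π_X). -/
open MeasureTheory ENNReal

noncomputable section

/-- Reversibility of a kernel `k` with respect to `ν`. -/
def KernelReversible {α : Type*} [MeasurableSpace α] (ν : Measure α) (k : α → Measure α) : Prop :=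
  ∀ A B : Set α, MeasurableSet A → MeasurableSet B →
    ∫⁻ x in A, k x B ∂ν = ∫⁻ x in B, k x A ∂ν

open ProbabilityTheory

section AuxLemmas

variable {X Y : Type*} [MeasurableSpace X] [MeasurableSpace Y]

lemma sect_meas_fst (κ : X → Measure Y) (hκ : Measurable κ)
    (hp : ∀ x, IsProbabilityMeasure (κ x)) {N : Set (X × Y)} (hN : MeasurableSet N) :
    Measurable fun x => κ x (Prod.mk x ⁻¹' N) := by
  haveI : IsMarkovKernel (⟨κ, hκ⟩ : Kernel X Y) := ⟨hp⟩
  exact Kernel.measurable_kernel_prodMk_left (κ := ⟨κ, hκ⟩) hN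

lemma sect_meas_snd (η : Y → Measure X) (hη : Measurable η)
    (hp : ∀ y, IsProbabilityMeasure (η y)) {N : Set (X × Y)} (hN : MeasurableSet N) :
    Measurable fun y => η y ((fun x => (x, y)) ⁻¹' N) := by
  haveI : IsMarkovKernel (⟨η, hη⟩ : Kernel Y X) := ⟨hp⟩
  have h : ∀ y, ((fun x => (x, y)) ⁻¹' N) = Prod.mk y ⁻¹' (Prod.swap ⁻¹' N) := fun _ => rfl
  simp_rw [h]
  exact Kernel.measurable_kernel_prodMk_left (κ := ⟨η, hη⟩) (measurable_swap hN)

lemma bind_meas_fst (κ : X → Measure Y) (hκ : Measurable κ)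
    (hp : ∀ x, IsProbabilityMeasure (κ x)) :
    Measurable (fun x => (κ x).map (fun y => (x, y)) : X → Measure (X × Y)) := by
  refine Measure.measurable_of_measurable_coe _ fun s hs => ?_
  simp_rw [Measure.map_apply measurable_prodMk_left hs]
  exact sect_meas_fst κ hκ hp hs

lemma bind_meas_snd (η : Y → Measure X) (hη : Measurable η)
    (hp : ∀ y, IsProbabilityMeasure (η y)) :
    Measurable (fun y => (η y).map (fun x => (x, y)) : Y → Measure (X × Y)) := by
  refine Measure.measurable_of_measurable_coe _ fun s hs => ?_
  simp_rw [Measure.map_apply measurable_prodMk_right hs]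
  exact sect_meas_snd η hη hp hs

lemma null_fst (π : Measure (X × Y)) (κ : X → Measure Y) (hκ : Measurable κ)
    (hp : ∀ x, IsProbabilityMeasure (κ x))
    (hdis : π = (π.fst).bind (fun x => (κ x).map (fun y => (x, y))))
    {N : Set (X × Y)} (hN : MeasurableSet N) (h0 : π N = 0) :
    ∀ᵐ x ∂π.fst, κ x (Prod.mk x ⁻¹' N) = 0 := by
  rw [hdis, Measure.bind_apply hN (bind_meas_fst κ hκ hp).aemeasurable] at h0
  simp_rw [Measure.map_apply measurable_prodMk_left hN] at h0
  have := (lintegral_eq_zero_iff (sect_meas_fst κ hκ hp hN)).mp h0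
  filter_upwards [this] with x hx using hx

lemma null_snd (π : Measure (X × Y)) (η : Y → Measure X) (hη : Measurable η)
    (hp : ∀ y, IsProbabilityMeasure (η y))
    (hdis : π = (π.snd).bind (fun y => (η y).map (fun x => (x, y))))
    {N : Set (X × Y)} (hN : MeasurableSet N) (h0 : π N = 0) :
    ∀ᵐ y ∂π.snd, η y ((fun x => (x, y)) ⁻¹' N) = 0 := by
  rw [hdis, Measure.bind_apply hN (bind_meas_snd η hη hp).aemeasurable] at h0
  simp_rw [Measure.map_apply measurable_prodMk_right hN] at h0
  have := (lintegral_eq_zero_iff (sect_meas_snd η hη hp hN)).mp h0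
  filter_upwards [this] with y hy using hy

lemma null_of_snd (π : Measure (X × Y)) (η : Y → Measure X) (hη : Measurable η)
    (hp : ∀ y, IsProbabilityMeasure (η y))
    (hdis : π = (π.snd).bind (fun y => (η y).map (fun x => (x, y))))
    {N : Set (X × Y)} (hN : MeasurableSet N)
    (h : ∀ᵐ y ∂π.snd, η y ((fun x => (x, y)) ⁻¹' N) = 0) : π N = 0 := by
  conv_lhs => rw [hdis]
  rw [Measure.bind_apply hN (bind_meas_snd η hη hp).aemeasurable]
  simp_rw [Measure.map_apply measurable_prodMk_right hN]
  have : ∫⁻ y, η y ((fun x => (x, y)) ⁻¹' N) ∂π.snd = ∫⁻ _, 0 ∂π.snd :=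
    lintegral_congr_ae (by filter_upwards [h] with y hy using hy)
  rw [this, lintegral_zero]

lemma dirichlet_eq {α : Type*} [MeasurableSpace α] (μ : Measure α)
    (T : Lp ℝ 2 μ →L[ℝ] Lp ℝ 2 μ) (f : Lp ℝ 2 μ) :
    dirichletForm μ ((ContinuousLinearMap.adjoint T) ∘L T) f = ‖f‖ ^ 2 - ‖T f‖ ^ 2 := by
  simp only [dirichletForm, ContinuousLinearMap.comp_apply]
  rw [inner_sub_left, ContinuousLinearMap.adjoint_inner_left, real_inner_self_eq_norm_sq,
    real_inner_self_eq_norm_sq]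

lemma oscNorm_congr {α : Type*} [MeasurableSpace α] {μ : Measure α} [SFinite μ]
    {f g : α → ℝ} (h : f =ᵐ[μ] g) : oscNorm μ f = oscNorm μ g := by
  refine essSup_congr_ae ?_
  have h1 := (Measure.quasiMeasurePreserving_fst (μ := μ) (ν := μ)).ae h
  have h2 := (Measure.quasiMeasurePreserving_snd (μ := μ) (ν := μ)).ae h
  filter_upwards [h1, h2] with p hp1 hp2
  simp only [hp1, hp2]

lemma oscNorm_comp_fst (π : Measure (X × Y)) [IsProbabilityMeasure π]
    (g : X → ℝ) (hg : Measurable g) :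
    oscNorm π (fun p => g p.1) = oscNorm π.fst g := by
  unfold oscNorm
  have hmap : π.fst.prod π.fst = (π.prod π).map (Prod.map Prod.fst Prod.fst) :=
    Measure.map_prod_map π π measurable_fst measurable_fst
  have hmm : AEMeasurable (fun r : X × X => ENNReal.ofReal |g r.1 - g r.2|)
      ((π.prod π).map (Prod.map Prod.fst Prod.fst)) :=
    (ENNReal.measurable_ofReal.comp
      (((hg.comp measurable_fst).sub (hg.comp measurable_snd)).abs)).aemeasurable
  rw [hmap, essSup_map_measure hmm (measurable_fst.prodMap measurable_fst).aemeasurable]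
  rfl

end AuxLemmas

variable {X Y : Type*} [MeasurableSpace X] [MeasurableSpace Y]

/-- if `P₂*P₂` satisfies a WPI with `β`, then the `X`-marginal kernel `P̄_X`
of `P₂` satisfies a WPI for `P̄_X*P̄_X` with the same `β`. -/
theorem stmt14
    (π : Measure (X × Y)) [IsProbabilityMeasure π]
    (κ : X → Measure Y) (hκmeas : Measurable κ) (hκprob : ∀ x, IsProbabilityMeasure (κ x))
    (η : Y → Measure X) (hηmeas : Measurable η) (hηprob : ∀ y, IsProbabilityMeasure (η y))
    (hκdis : π = (π.fst).bind (fun x => (κ x).map (fun y => (x, y))))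
    (hηdis : π = (π.snd).bind (fun y => (η y).map (fun x => (x, y))))
    -- the operator G₁ on L²(π)
    (G₁ : Lp ℝ 2 π →L[ℝ] Lp ℝ 2 π)
    (hG₁ : ∀ f : Lp ℝ 2 π, ∀ᵐ p ∂π, G₁ f p = ∫ y', f (p.1, y') ∂(κ p.1))
    -- the operator H₂, induced by the kernel H_{2|y}(dx'|x), reversible for each y
    (KH₂ : X × Y → Measure X) (hKH₂meas : Measurable KH₂)
    (hKH₂prob : ∀ p, IsProbabilityMeasure (KH₂ p))
    (hKH₂rev : ∀ y, KernelReversible (η y) (fun x => KH₂ (x, y)))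
    (H₂ : Lp ℝ 2 π →L[ℝ] Lp ℝ 2 π)
    (hH₂ : ∀ f : Lp ℝ 2 π, ∀ᵐ p ∂π, H₂ f p = ∫ x', f (x', p.2) ∂(KH₂ p))
    -- the X-marginal operator P̄_X of P₂ = G₁H₂ on L²(π_X)
    (PbarX : Lp ℝ 2 π.fst →L[ℝ] Lp ℝ 2 π.fst)
    (hPbarX : ∀ g : Lp ℝ 2 π.fst, ∀ᵐ x ∂π.fst,
      PbarX g x = ∫ y, (∫ x', g x' ∂(KH₂ (x, y))) ∂(κ x))
    -- β and the WPI for P₂*P₂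
    (β : ℝ → ℝ) (hβnonneg : ∀ s : ℝ, 0 < s → 0 ≤ β s)
    (hβanti : AntitoneOn β (Set.Ioi (0 : ℝ)))
    (hβlim : Filter.Tendsto β Filter.atTop (nhds 0))
    (hwpi : ∀ s : ℝ, 0 < s → ∀ f : Lp ℝ 2 π, (∫ p, f p ∂π) = 0 →
      ENNReal.ofReal (‖f‖ ^ 2) ≤
        ENNReal.ofReal
            (s * dirichletForm π
              ((ContinuousLinearMap.adjoint (G₁ ∘L H₂)) ∘L (G₁ ∘L H₂)) f) +
          ENNReal.ofReal (β s) * (oscNorm π f) ^ 2) :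
    ∀ s : ℝ, 0 < s → ∀ g : Lp ℝ 2 π.fst, (∫ x, g x ∂π.fst) = 0 →
      ENNReal.ofReal (‖g‖ ^ 2) ≤
        ENNReal.ofReal
            (s * dirichletForm π.fst ((ContinuousLinearMap.adjoint PbarX) ∘L PbarX) g) +
          ENNReal.ofReal (β s) * (oscNorm π.fst g) ^ 2 := by
  intro s hs g hg0
  haveI : IsMarkovKernel (⟨KH₂, hKH₂meas⟩ : Kernel (X × Y) X) := ⟨hKH₂prob⟩
  -- the lifting isometry
  have mp : MeasurePreserving (Prod.fst : X × Y → X) π π.fst := ⟨measurable_fst, rfl⟩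
  set F : Lp ℝ 2 π := Lp.compMeasurePreserving Prod.fst mp g with hFdef
  have hF : ⇑F =ᵐ[π] fun p => g p.1 := Lp.coeFn_compMeasurePreserving g mp
  have hgmeas : StronglyMeasurable (⇑g) := Lp.stronglyMeasurable g
  have hFmeas : StronglyMeasurable (⇑F) := Lp.stronglyMeasurable F
  -- mean zero
  have hFint : (∫ p, F p ∂π) = 0 := by
    rw [integral_congr_ae hF]
    have h1 : ∫ x, g x ∂π.fst = ∫ p, g p.1 ∂π :=
      integral_map measurable_fst.aemeasurable (Lp.aestronglyMeasurable g)
    rw [← h1, hg0]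
  -- Step B1 : H₂ F =ᵐ[π] fun p => ∫ x', g x' ∂KH₂ p
  have hNmeas : MeasurableSet {p : X × Y | ¬ F p = g p.1} :=
    (MeasureTheory.StronglyMeasurable.measurableSet_eq_fun hFmeas (hgmeas.comp_measurable measurable_fst)).compl
  have hNnull : π {p : X × Y | ¬ F p = g p.1} = 0 := ae_iff.mp hF
  have hsecnull := null_snd π η hηmeas hηprob hηdis hNmeas hNnull
  -- invariance from reversibility
  have hinv : ∀ (y : Y) (A : Set X), MeasurableSet A →
      ∫⁻ x, KH₂ (x, y) A ∂η y = η y A := by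
    intro y A hA
    have h := hKH₂rev y Set.univ A MeasurableSet.univ hA
    rw [Measure.restrict_univ] at h
    rw [h]
    have h2 : ∫⁻ x in A, KH₂ (x, y) Set.univ ∂η y = ∫⁻ _ in A, 1 ∂η y := by
      refine lintegral_congr fun x => ?_
      haveI := hKH₂prob (x, y)
      exact measure_univ
    rw [h2, setLIntegral_one]
  have hkey : ∀ᵐ y ∂π.snd, ∀ᵐ x ∂η y,
      ∫ x', F (x', y) ∂KH₂ (x, y) = ∫ x', g x' ∂KH₂ (x, y) := by
    filter_upwards [hsecnull] with y hy
    have hM : MeasurableSet {x : X | ¬ F (x, y) = g x} :=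
      (MeasureTheory.StronglyMeasurable.measurableSet_eq_fun (hFmeas.comp_measurable measurable_prodMk_right) hgmeas).compl
    have h1 : ∫⁻ x, KH₂ (x, y) {x' : X | ¬ F (x', y) = g x'} ∂η y = 0 := by
      rw [hinv y _ hM]; exact hy
    have h2 : ∀ᵐ x ∂η y, KH₂ (x, y) {x' : X | ¬ F (x', y) = g x'} = 0 := by
      have hm : Measurable fun x => KH₂ (x, y) {x' : X | ¬ F (x', y) = g x'} :=
        (Measure.measurable_coe hM).comp (hKH₂meas.comp measurable_prodMk_right)
      have := (lintegral_eq_zero_iff hm).mp h1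
      filter_upwards [this] with x hx using hx
    filter_upwards [h2] with x hx
    refine integral_congr_ae ?_
    rw [Filter.EventuallyEq, ae_iff]
    exact hx
  have hB1' : ∀ᵐ p ∂π, ∫ x', F (x', p.2) ∂KH₂ p = ∫ x', g x' ∂KH₂ p := by
    have m1 : StronglyMeasurable fun p : X × Y => ∫ x', F (x', p.2) ∂KH₂ p := by
      have : StronglyMeasurable fun q : (X × Y) × X => F (q.2, q.1.2) :=
        hFmeas.comp_measurable (measurable_snd.prodMk (measurable_fst.snd))
      exact this.integral_kernel_prod_right' (κ := ⟨KH₂, hKH₂meas⟩)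
    have m2 : StronglyMeasurable fun p : X × Y => ∫ x', g x' ∂KH₂ p := by
      have : StronglyMeasurable fun q : (X × Y) × X => g q.2 :=
        hgmeas.comp_measurable measurable_snd
      exact this.integral_kernel_prod_right' (κ := ⟨KH₂, hKH₂meas⟩)
    have hSm : MeasurableSet
        {p : X × Y | ¬ ∫ x', F (x', p.2) ∂KH₂ p = ∫ x', g x' ∂KH₂ p} :=
      (MeasureTheory.StronglyMeasurable.measurableSet_eq_fun m1 m2).compl
    rw [ae_iff]
    refine null_of_snd π η hηmeas hηprob hηdis hSm ?_
    filter_upwards [hkey] with y hy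
    have := ae_iff.mp hy
    exact this
  have hB1 : ⇑(H₂ F) =ᵐ[π] fun p => ∫ x', g x' ∂KH₂ p := by
    filter_upwards [hH₂ F, hB1'] with p h1 h2
    rw [h1]; exact h2
  -- Step B2 : G₁ (H₂ F) =ᵐ[π] (PbarX g) ∘ fst
  have hΦmeas : StronglyMeasurable fun p : X × Y => ∫ x', g x' ∂KH₂ p := by
    have : StronglyMeasurable fun q : (X × Y) × X => g q.2 :=
      hgmeas.comp_measurable measurable_snd
    exact this.integral_kernel_prod_right' (κ := ⟨KH₂, hKH₂meas⟩)
  have hN2meas : MeasurableSet {p : X × Y | ¬ (H₂ F) p = ∫ x', g x' ∂KH₂ p} :=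
    (MeasureTheory.StronglyMeasurable.measurableSet_eq_fun (Lp.stronglyMeasurable (H₂ F)) hΦmeas).compl
  have hN2null : π {p : X × Y | ¬ (H₂ F) p = ∫ x', g x' ∂KH₂ p} = 0 := ae_iff.mp hB1
  have hsec2 := null_fst π κ hκmeas hκprob hκdis hN2meas hN2null
  have hB2' : ∀ᵐ x ∂π.fst,
      ∫ y', (H₂ F) (x, y') ∂κ x = ∫ y', (∫ x', g x' ∂KH₂ (x, y')) ∂κ x := by
    filter_upwards [hsec2] with x hx
    refine integral_congr_ae ?_
    rw [Filter.EventuallyEq, ae_iff]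
    exact hx
  have hB2 : ∀ᵐ p ∂π,
      ∫ y', (H₂ F) (p.1, y') ∂κ p.1 = ∫ y', (∫ x', g x' ∂KH₂ (p.1, y')) ∂κ p.1 :=
    ae_of_ae_map measurable_fst.aemeasurable hB2'
  have hPlift : ∀ᵐ p ∂π,
      PbarX g p.1 = ∫ y, (∫ x', g x' ∂KH₂ (p.1, y)) ∂κ p.1 :=
    ae_of_ae_map measurable_fst.aemeasurable (hPbarX g)
  have hι : ⇑(Lp.compMeasurePreserving Prod.fst mp (PbarX g)) =ᵐ[π]
      fun p => PbarX g p.1 := Lp.coeFn_compMeasurePreserving (PbarX g) mp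
  have hTF : (G₁ ∘L H₂) F = Lp.compMeasurePreserving Prod.fst mp (PbarX g) := by
    refine Lp.ext ?_
    have hcomp : ⇑((G₁ ∘L H₂) F) =ᵐ[π] ⇑(G₁ (H₂ F)) := by
      rw [ContinuousLinearMap.comp_apply]
    filter_upwards [hcomp, hG₁ (H₂ F), hB2, hPlift, hι] with p h0 h1 h2 h3 h4
    rw [h0, h1, h2, h4, h3]
  -- norms
  have hnormF : ‖F‖ = ‖g‖ := Lp.norm_compMeasurePreserving g mp
  have hnormTF : ‖(G₁ ∘L H₂) F‖ = ‖PbarX g‖ := by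
    rw [hTF]; exact Lp.norm_compMeasurePreserving (PbarX g) mp
  -- Dirichlet form equality
  have hdf : dirichletForm π ((ContinuousLinearMap.adjoint (G₁ ∘L H₂)) ∘L (G₁ ∘L H₂)) F
      = dirichletForm π.fst ((ContinuousLinearMap.adjoint PbarX) ∘L PbarX) g := by
    rw [dirichlet_eq, dirichlet_eq, hnormF, hnormTF]
  -- oscillation norm equality
  have hosc : oscNorm π ⇑F = oscNorm π.fst ⇑g := by
    rw [oscNorm_congr hF]
    exact oscNorm_comp_fst π g hgmeas.measurable
  have h := hwpi s hs F hFint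
  rw [hnormF, hdf, hosc] at h
  exact h

end
end
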